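/- Let R be a finite commutative ring with identity, T = Tr(R), and n1, n2 nonzero zero-divisors of R. Let A be the matrix with a11 = n1, a12 = n2, a21 = 0, a22 = 0. Then a matrix B = [[a,b],[0,c]] in T \ Z(T) with B ≠ A commutes with A if and only if b·n1 + (c−a)·n2 = 0. Moreover, if S denotes the number of pairs (x,y) ∈ R × R with n1·x + n2·y = 0, then |N(A)| = S·|R| − |R| − 1. -/

import Mathlib

open Matrix

/-- The ring of 2×2 upper triangular matrices over `R`. -/
def Tri (R : Type*) [CommRing R] : Subring (Matrix (Fin 2) (Fin 2) R) where
  carrier := {A | A 1 0 = 0}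
  mul_mem' := by
    intro a b ha hb
    simp only [Set.mem_setOf_eq] at *
    simp [Matrix.mul_apply, Fin.sum_univ_two, ha, hb]
  one_mem' := by simp [Matrix.one_apply]
  add_mem' := by
    intro a b ha hb
    simp_all [Matrix.add_apply]
  zero_mem' := by simp
  neg_mem' := by
    intro a ha
    simp_all

/-- The commuting graph of a ring `T`: vertices are the noncentral elements,
two distinct vertices are adjacent iff they commute. -/
def commGraph (T : Type*) [Ring T] : SimpleGraph {x : T // x ∉ Set.center T} where
  Adj a b := a ≠ b ∧ (a : T) * b = b * a
  symm := ⟨by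
    rintro a b ⟨h1, h2⟩
    exact ⟨h1.symm, h2.symm⟩⟩
  loopless := ⟨by rintro a ⟨h, _⟩; exact h rfl⟩

lemma mem_Tri_iff {R : Type*} [CommRing R] (M : Matrix (Fin 2) (Fin 2) R) :
    M ∈ Tri R ↔ M 1 0 = 0 := Iff.rfl

lemma Tri.eq_mk {R : Type*} [CommRing R] (B : Tri R) :
    (B : Matrix (Fin 2) (Fin 2) R) =
      !![(B : Matrix (Fin 2) (Fin 2) R) 0 0, (B : Matrix (Fin 2) (Fin 2) R) 0 1;
         0, (B : Matrix (Fin 2) (Fin 2) R) 1 1] := by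
  have h := B.2
  rw [mem_Tri_iff] at h
  ext i j
  fin_cases i <;> fin_cases j <;> simp [h]

lemma mem_center_Tri {R : Type*} [CommRing R] (B : Tri R) :
    B ∈ Set.center (Tri R) ↔
      ∃ r : R, (B : Matrix (Fin 2) (Fin 2) R) = !![r, 0; 0, r] := by
  rw [Semigroup.mem_center_iff]
  constructor
  · intro h
    have hB := Tri.eq_mk B
    refine ⟨(B : Matrix (Fin 2) (Fin 2) R) 0 0, ?_⟩
    have h1 : (⟨!![(0:R),1;0,0], by rw [mem_Tri_iff]; simp⟩ : Tri R) * B =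
        B * ⟨!![(0:R),1;0,0], by rw [mem_Tri_iff]; simp⟩ := h _
    have h2 : (⟨!![(1:R),0;0,0], by rw [mem_Tri_iff]; simp⟩ : Tri R) * B =
        B * ⟨!![(1:R),0;0,0], by rw [mem_Tri_iff]; simp⟩ := h _
    rw [Subtype.ext_iff] at h1 h2
    have h1' : (!![(0:R),1;0,0] : Matrix (Fin 2) (Fin 2) R) * B
        = (B : Matrix (Fin 2) (Fin 2) R) * !![(0:R),1;0,0] := h1
    have h2' : (!![(1:R),0;0,0] : Matrix (Fin 2) (Fin 2) R) * B
        = (B : Matrix (Fin 2) (Fin 2) R) * !![(1:R),0;0,0] := h2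
    rw [hB] at h1' h2' ⊢
    rw [Matrix.mul_fin_two, Matrix.mul_fin_two] at h1' h2'
    have e1 := congrFun (congrFun h1' 0) 1
    have e2 := congrFun (congrFun h2' 0) 1
    simp at e1 e2
    rw [e1, e2]; simp
  · rintro ⟨r, hr⟩ g
    apply Subtype.ext
    show (g : Matrix (Fin 2) (Fin 2) R) * B = (B : Matrix (Fin 2) (Fin 2) R) * g
    rw [hr, Tri.eq_mk g, Matrix.mul_fin_two, Matrix.mul_fin_two]
    ext i j
    fin_cases i <;> fin_cases j <;> simp <;> ring

lemma Tri.comm_iff {R : Type*} [CommRing R] {n₁ n₂ : R} {A B : Tri R}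
    (hA : (A : Matrix (Fin 2) (Fin 2) R) = !![n₁, n₂; 0, 0]) {a b c : R}
    (hB : (B : Matrix (Fin 2) (Fin 2) R) = !![a, b; 0, c]) :
    A * B = B * A ↔ n₁ * b + n₂ * c = a * n₂ := by
  have key : A * B = B * A ↔
      (A : Matrix (Fin 2) (Fin 2) R) * B = (B : Matrix (Fin 2) (Fin 2) R) * A := by
    rw [Subtype.ext_iff]; rfl
  rw [key, hA, hB, Matrix.mul_fin_two, Matrix.mul_fin_two, ← Matrix.ext_iff]
  simp [Fin.forall_fin_two]
  intro _; ring

@[simp] lemma Tri.coe_mk {R : Type*} [CommRing R] (M : Matrix (Fin 2) (Fin 2) R)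
    (h : M ∈ Tri R) : ((⟨M, h⟩ : Tri R) : Matrix (Fin 2) (Fin 2) R) = M := rfl

/-- Theorem 2.2(vi): for `A = [[n₁,n₂],[0,0]]` with `n₁, n₂` nonzero
zero-divisors, a noncentral `B = [[a,b],[0,c]] ≠ A` commutes with `A` iff
`b n₁ + (c - a) n₂ = 0`; moreover if `S` is the number of pairs `(x,y)` with
`n₁ x + n₂ y = 0` then `|N(A)| = S |R| - |R| - 1`. -/
theorem neighbourhood_A6 {R : Type*} [CommRing R] [Fintype R] (n₁ n₂ : R)
    (hn₁ : n₁ ≠ 0) (hn₂ : n₂ ≠ 0)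
    (hzd₁ : ∃ s : R, s ≠ 0 ∧ s * n₁ = 0) (hzd₂ : ∃ s : R, s ≠ 0 ∧ s * n₂ = 0)
    (A : Tri R) (hA : (A : Matrix (Fin 2) (Fin 2) R) = !![n₁, n₂; 0, 0]) :
    (∀ (B : Tri R) (a b c : R),
        (B : Matrix (Fin 2) (Fin 2) R) = !![a, b; 0, c] →
        B ∉ Set.center (Tri R) → B ≠ A →
        (A * B = B * A ↔ b * n₁ + (c - a) * n₂ = 0)) ∧
    Nat.card {B : Tri R | A * B = B * A ∧ B ≠ A ∧ B ∉ Set.center (Tri R)} =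
      Nat.card {p : R × R | n₁ * p.1 + n₂ * p.2 = 0} * Nat.card R -
        Nat.card R - 1 := by
  constructor
  · intro B a b c hB _ _
    rw [Tri.comm_iff hA hB]
    constructor <;> intro h <;> linear_combination h
  · set C : Set (Tri R) := {B | A * B = B * A} with hC
    set Z : Set (Tri R) := Set.center (Tri R) with hZ
    set P : Set (R × R) := {p : R × R | n₁ * p.1 + n₂ * p.2 = 0} with hP
    have hset : {B : Tri R | A * B = B * A ∧ B ≠ A ∧ B ∉ Set.center (Tri R)}
        = C \ (Z ∪ {A}) := by
      ext B
      simp only [hC, hZ, Set.mem_setOf_eq, Set.mem_diff, Set.mem_union,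
        Set.mem_singleton_iff]
      tauto
    have eC : C ≃ P × R :=
      { toFun := fun B =>
          (⟨((B.1 : Matrix (Fin 2) (Fin 2) R) 0 1,
              (B.1 : Matrix (Fin 2) (Fin 2) R) 1 1
                - (B.1 : Matrix (Fin 2) (Fin 2) R) 0 0),
            by
              have h := (Tri.comm_iff hA (Tri.eq_mk B.1)).1 B.2
              simp only [hP, Set.mem_setOf_eq]
              linear_combination h⟩,
           (B.1 : Matrix (Fin 2) (Fin 2) R) 0 0)
        invFun := fun q =>
          ⟨⟨!![q.2, q.1.1.1; 0, q.2 + q.1.1.2], by rw [mem_Tri_iff]; simp⟩,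
            by
              simp only [hC, Set.mem_setOf_eq]
              rw [Tri.comm_iff hA rfl]
              have h := q.1.2
              simp only [hP, Set.mem_setOf_eq] at h
              linear_combination h⟩
        left_inv := by
          intro B
          apply Subtype.ext
          apply Subtype.ext
          simp only [Tri.coe_mk]
          conv_rhs => rw [Tri.eq_mk B.1]
          ext i j
          fin_cases i <;> fin_cases j <;> simp <;> ring
        right_inv := by
          intro q
          refine Prod.ext (Subtype.ext (Prod.ext ?_ ?_)) ?_ <;> simp }
    have hcardC : Nat.card C = Nat.card P * Nat.card R := by
      rw [Nat.card_congr eC, Nat.card_prod]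
    have eZ : Z ≃ R :=
      { toFun := fun B => (B.1 : Matrix (Fin 2) (Fin 2) R) 0 0
        invFun := fun r =>
          ⟨⟨!![r, 0; 0, r], by rw [mem_Tri_iff]; simp⟩,
            (mem_center_Tri _).2 ⟨r, rfl⟩⟩
        left_inv := by
          intro B
          obtain ⟨r, hr⟩ := (mem_center_Tri B.1).1 B.2
          have h00 : (B.1 : Matrix (Fin 2) (Fin 2) R) 0 0 = r := by rw [hr]; simp
          apply Subtype.ext
          apply Subtype.ext
          simp only [Tri.coe_mk]
          show (!![(B.1 : Matrix (Fin 2) (Fin 2) R) 0 0, 0; 0,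
              (B.1 : Matrix (Fin 2) (Fin 2) R) 0 0] : Matrix (Fin 2) (Fin 2) R)
            = (B.1 : Matrix (Fin 2) (Fin 2) R)
          rw [h00, hr]
        right_inv := fun r => by simp }
    have hcardZ : Nat.card Z = Nat.card R := Nat.card_congr eZ
    have hAZ : A ∉ Z := by
      rw [hZ, mem_center_Tri]
      rintro ⟨r, hr⟩
      have := congrFun (congrFun (hA.symm.trans hr) 0) 1
      simp at this
      exact hn₂ this
    have hsub : Z ∪ {A} ⊆ C := by
      rintro B (hB | hB)
      · obtain ⟨r, hr⟩ := (mem_center_Tri B).1 hB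
        simp only [hC, Set.mem_setOf_eq]
        rw [Tri.comm_iff hA hr]
        ring
      · simp only [Set.mem_singleton_iff] at hB
        subst hB
        simp [hC]
    have hdiff : (C \ (Z ∪ {A})).ncard = C.ncard - (Z ∪ {A}).ncard :=
      Set.ncard_diff hsub (Set.toFinite _)
    have hins : (Z ∪ {A}).ncard = Z.ncard + 1 := by
      rw [Set.union_singleton, Set.ncard_insert_of_notMem hAZ (Set.toFinite _)]
    rw [hset, Nat.card_coe_set_eq, hdiff, hins]
    rw [Nat.card_coe_set_eq] at hcardC hcardZ
    rw [hcardC, hcardZ]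
    omega
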